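/- Let p > 5 and define f : [0,1] → ℝ by f(ξ) = ((p−5)/2)·∫_ξ^1 (1−s²)^{2/(p−1)} ds − ξ·(1−ξ²)^{2/(p−1)}. Then f has exactly one zero ξ₁ in the open interval (0,1); moreover f(ξ) ≥ 0 for all ξ ∈ [0,ξ₁] and f(ξ) < 0 for all ξ ∈ (ξ₁,1). -/

import Mathlib

open MeasureTheory Real Set Filter Topology

/-- For `p > 5` the function
`f(ξ) = ((p−5)/2)·∫_ξ^1 (1−s²)^{2/(p−1)} ds − ξ·(1−ξ²)^{2/(p−1)}`
has exactly one zero `ξ₁` in `(0,1)`; moreover `f ≥ 0` on `[0,ξ₁]` and `f < 0` on `(ξ₁,1)`. -/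
theorem unique_zero_of_threshold_function (p : ℝ) (hp : 5 < p)
    (f : ℝ → ℝ)
    (hf : f = fun ξ : ℝ => (p - 5) / 2 * (∫ s in ξ..1, (1 - s ^ 2) ^ (2 / (p - 1)))
      - ξ * (1 - ξ ^ 2) ^ (2 / (p - 1))) :
    ∃ ξ₁ ∈ Set.Ioo (0 : ℝ) 1, f ξ₁ = 0 ∧
      (∀ ξ ∈ Set.Ioo (0 : ℝ) 1, f ξ = 0 → ξ = ξ₁) ∧
      (∀ ξ ∈ Set.Icc (0 : ℝ) ξ₁, 0 ≤ f ξ) ∧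
      (∀ ξ ∈ Set.Ioo ξ₁ 1, f ξ < 0) := by
  set α := 2 / (p - 1) with hαdef
  have hp1 : (0:ℝ) < p - 1 := by linarith
  have hα0 : 0 < α := by positivity
  set g : ℝ → ℝ := fun s => (1 - s ^ 2) ^ α with hgdef
  have hgc : Continuous g := by
    apply Continuous.rpow_const (by continuity) (fun x => Or.inr hα0.le)
  have hgint : ∀ a b : ℝ, IntervalIntegrable g volume a b := fun a b =>
    hgc.intervalIntegrable a b
  have hGc : Continuous fun ξ : ℝ => ∫ s in ξ..1, g s := by
    have h1 : Continuous fun ξ : ℝ => ∫ s in (1:ℝ)..ξ, g s :=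
      intervalIntegral.continuous_primitive hgint 1
    have : (fun ξ : ℝ => ∫ s in ξ..1, g s) = fun ξ => -∫ s in (1:ℝ)..ξ, g s := by
      funext ξ; rw [← intervalIntegral.integral_symm]
    rw [this]; exact h1.neg
  have hfc : Continuous f := by
    rw [hf]
    exact (continuous_const.mul hGc).sub (continuous_id.mul hgc)
  -- derivative
  have hderiv : ∀ ξ ∈ Ioo (-1:ℝ) 1,
      HasDerivAt f ((1 - ξ^2) ^ (α - 1) * (((p-3)/2 + 2*α) * ξ^2 - (p-3)/2)) ξ := by
    intro ξ hξ
    have hx2 : 0 < 1 - ξ ^ 2 := by nlinarith [hξ.1, hξ.2]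
    have hF : HasDerivAt (fun u => ∫ s in u..1, g s) (-(g ξ)) ξ :=
      intervalIntegral.integral_hasDerivAt_left (hgint ξ 1)
        (hgc.stronglyMeasurableAtFilter _ _) hgc.continuousAt
    have h1 : HasDerivAt (fun x : ℝ => 1 - x ^ 2) (-(2 * ξ)) ξ := by
      simpa using ((hasDerivAt_pow 2 ξ).const_sub 1)
    have h2 := h1.rpow_const (p := α) (Or.inl hx2.ne')
    have h3 := (hasDerivAt_id ξ).mul h2
    have h4 := (hF.const_mul ((p - 5) / 2)).sub h3
    have hsplit : (1 - ξ ^ 2) ^ α = (1 - ξ ^ 2) ^ (α - 1) * (1 - ξ ^ 2) := by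
      rw [← Real.rpow_add_one hx2.ne' (α - 1)]; ring_nf
    rw [hf]
    refine h4.congr_deriv ?_
    simp only [hgdef, hsplit, id_eq]
    ring
  -- the critical point
  have hc : (0:ℝ) < (p-3)/2 := by linarith
  have hden : (0:ℝ) < (p-3)/2 + 2*α := by linarith
  set ξs := Real.sqrt (((p-3)/2) / ((p-3)/2 + 2*α)) with hξsdef
  have hrat_pos : 0 < ((p-3)/2) / ((p-3)/2 + 2*α) := div_pos hc hden
  have hrat_lt : ((p-3)/2) / ((p-3)/2 + 2*α) < 1 := by
    rw [div_lt_one hden]; linarith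
  have hξs_sq : ξs ^ 2 = ((p-3)/2) / ((p-3)/2 + 2*α) := Real.sq_sqrt hrat_pos.le
  have hξs_pos : 0 < ξs := Real.sqrt_pos.mpr hrat_pos
  have hξs_lt : ξs < 1 := by
    nlinarith [hξs_sq, hξs_pos]
  -- strict antitone on [0, ξs]
  have hanti : StrictAntiOn f (Icc 0 ξs) := by
    apply strictAntiOn_of_deriv_neg (convex_Icc _ _) hfc.continuousOn
    intro x hx
    rw [interior_Icc] at hx
    have hx1 : x ∈ Ioo (-1:ℝ) 1 := ⟨by linarith [hx.1], by linarith [hx.2]⟩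
    rw [(hderiv x hx1).deriv]
    have hA : 0 < (1 - x^2) ^ (α - 1) :=
      Real.rpow_pos_of_pos (by nlinarith [hx1.1, hx1.2]) _
    have hxsq : x ^ 2 < ξs ^ 2 := by
      exact pow_lt_pow_left₀ hx.2 hx.1.le (by norm_num)
    have hB : ((p-3)/2 + 2*α) * x^2 - (p-3)/2 < 0 := by
      rw [hξs_sq] at hxsq
      have := (lt_div_iff₀ hden).mp hxsq
      nlinarith
    exact mul_neg_of_pos_of_neg hA hB
  -- strict monotone on [ξs, 1]
  have hmono : StrictMonoOn f (Icc ξs 1) := by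
    apply strictMonoOn_of_deriv_pos (convex_Icc _ _) hfc.continuousOn
    intro x hx
    rw [interior_Icc] at hx
    have hx1 : x ∈ Ioo (-1:ℝ) 1 := ⟨by linarith [hx.1, hξs_pos], hx.2⟩
    rw [(hderiv x hx1).deriv]
    have hA : 0 < (1 - x^2) ^ (α - 1) :=
      Real.rpow_pos_of_pos (by nlinarith [hx1.1, hx1.2]) _
    have hxsq : ξs ^ 2 < x ^ 2 := by
      exact pow_lt_pow_left₀ hx.1 hξs_pos.le (by norm_num)
    have hB : 0 < ((p-3)/2 + 2*α) * x^2 - (p-3)/2 := by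
      rw [hξs_sq] at hxsq
      have := (div_lt_iff₀ hden).mp hxsq
      nlinarith
    exact mul_pos hA hB
  -- values at endpoints
  have hf1 : f 1 = 0 := by
    rw [hf]
    have h11 : ((1:ℝ) - 1 ^ 2) = 0 := by norm_num
    simp [h11, intervalIntegral.integral_same, Real.zero_rpow hα0.ne']
  have hf0 : 0 < f 0 := by
    rw [hf]
    have hint : 0 < ∫ s in (0:ℝ)..1, g s := by
      apply intervalIntegral.intervalIntegral_pos_of_pos_on (hgint 0 1)
      · intro x hx
        exact Real.rpow_pos_of_pos (by nlinarith [hx.1, hx.2]) _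
      · norm_num
    have h5 : 0 < (p - 5) / 2 := by linarith
    simp only [zero_mul, sub_zero]
    positivity
  have hfξs : f ξs < 0 := by
    have := hmono ⟨le_rfl, hξs_lt.le⟩ ⟨hξs_lt.le, le_rfl⟩ hξs_lt
    rwa [hf1] at this
  -- IVT
  obtain ⟨ξ₁, hξ₁mem, hξ₁val⟩ : ∃ ξ₁ ∈ Ioo (0:ℝ) ξs, f ξ₁ = 0 := by
    have h := intermediate_value_Ioo' (le_of_lt hξs_pos) hfc.continuousOn
      (a := (0:ℝ)) (b := ξs)
    have h0 : (0:ℝ) ∈ Ioo (f ξs) (f 0) := ⟨hfξs, hf0⟩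
    obtain ⟨ξ₁, hmem, hval⟩ := h h0
    exact ⟨ξ₁, hmem, hval⟩
  have hξ₁Icc : ξ₁ ∈ Icc (0:ℝ) ξs := ⟨hξ₁mem.1.le, hξ₁mem.2.le⟩
  -- negativity on (ξ₁, 1)
  have hneg : ∀ ξ ∈ Ioo ξ₁ (1:ℝ), f ξ < 0 := by
    intro ξ hξ
    rcases le_or_gt ξ ξs with hle | hgt
    · have := hanti hξ₁Icc ⟨by linarith [hξ₁mem.1, hξ.1], hle⟩ hξ.1
      rwa [hξ₁val] at this
    · have := hmono ⟨hgt.le, hξ.2.le⟩ ⟨hξs_lt.le, le_rfl⟩ hξ.2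
      rwa [hf1] at this
  refine ⟨ξ₁, ⟨hξ₁mem.1, lt_trans hξ₁mem.2 hξs_lt⟩, hξ₁val, ?_, ?_, hneg⟩
  · intro ξ hξ hval
    by_contra hne
    rcases lt_or_gt_of_ne hne with hlt | hgt
    · have := hanti ⟨hξ.1.le, by linarith [hξ₁mem.2]⟩ hξ₁Icc hlt
      rw [hξ₁val, hval] at this
      exact lt_irrefl 0 this
    · have := hneg ξ ⟨hgt, hξ.2⟩
      rw [hval] at this
      exact lt_irrefl 0 this
  · intro ξ hξ
    rcases eq_or_lt_of_le hξ.2 with heq | hlt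
    · rw [heq, hξ₁val]
    · have := hanti ⟨hξ.1, by linarith [hξ₁mem.2]⟩ hξ₁Icc hlt
      rw [hξ₁val] at this
      exact this.le
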